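/- A Kripke frame validates the Löb schema □(□p → p) → □p if and only if its accessibility relation is transitive and converse well-founded (every nonempty subset X of W has an element with no R-successor in X). -/
import Mathlib


/-- Modal formulas built from propositional atoms, ⊥, →, □. -/
inductive Form : Type
  | atom : ℕ → Form
  | bot  : Form
  | imp  : Form → Form → Form
  | box  : Form → Form

namespace Form
/-- Negation: ¬A := A → ⊥. -/
def neg (A : Form) : Form := A.imp bot
/-- Truth: ⊤ := ⊥ → ⊥. -/
def top : Form := bot.imp bot
/-- Conjunction defined classically from → and ⊥. -/
def conj (A B : Form) : Form := (A.imp B.neg).neg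
/-- Biconditional. -/
def biimp (A B : Form) : Form := (A.imp B).conj (B.imp A)
/-- Diamond: ◇A := ¬□¬A. -/
def dia (A : Form) : Form := A.neg.box.neg
end Form

/-- Axioms of the minimal normal calculus K: a complete set of schemata for
classical propositional logic plus the distribution schema. -/
inductive KAxiom : Form → Prop
  | imp1 (A B : Form) : KAxiom (A.imp (B.imp A))
  | imp2 (A B C : Form) : KAxiom ((A.imp (B.imp C)).imp ((A.imp B).imp (A.imp C)))
  | dne (A : Form) : KAxiom (A.neg.neg.imp A)
  | dist (A B : Form) : KAxiom ((A.imp B).box.imp (A.box.imp B.box))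

/-- Deducibility `S.H ⊢ A` in the normal modal system extending K by the
schemata (set of instances) `S`, from hypotheses `H`. -/
inductive Deduce (S : Set Form) : Set Form → Form → Prop
  | kaxiom {H : Set Form} {A : Form} : KAxiom A → Deduce S H A
  | schema {H : Set Form} {A : Form} : A ∈ S → Deduce S H A
  | hyp {H : Set Form} {A : Form} : A ∈ H → Deduce S H A
  | mp {H : Set Form} {A B : Form} : Deduce S H (A.imp B) → Deduce S H A → Deduce S H B
  | nec {H : Set Form} {A : Form} : Deduce S (∅ : Set Form) A → Deduce S H A.box

/-- Kripke forcing: truth of a formula at a world of a model `(D,R,V)`. -/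
def Form.holds {W : Type*} (D : Set W) (R : W → W → Prop) (V : ℕ → W → Prop) :
    Form → W → Prop
  | Form.atom n => fun w => V n w
  | Form.bot => fun _ => False
  | Form.imp A B => fun w => Form.holds D R V A w → Form.holds D R V B w
  | Form.box A => fun w => ∀ x ∈ D, R w x → Form.holds D R V A x

/-- `(D,R)` is a Kripke frame: nonempty universe, accessibility relation on it. -/
def IsFrame {W : Type*} (D : Set W) (R : W → W → Prop) : Prop :=
  D.Nonempty ∧ ∀ x y : W, R x y → x ∈ D ∧ y ∈ D

/-- Validity of a formula in a frame: true at every world under every valuation. -/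
def ValidIn {W : Type*} (D : Set W) (R : W → W → Prop) (A : Form) : Prop :=
  ∀ (V : ℕ → W → Prop), ∀ w ∈ D, Form.holds D R V A w

/-- Conjunction of a list of formulas. -/
def conjList : List Form → Form
  | [] => Form.top
  | A :: X => A.conj (conjList X)

/-- `X` is S-consistent iff the negation of its conjunction is not deducible. -/
def Consistent (S : Set Form) (X : List Form) : Prop :=
  ¬ Deduce S ∅ (conjList X).neg

/-- The subformula relation. -/
inductive Subformula : Form → Form → Prop
  | refl (A : Form) : Subformula A A
  | of_imp_left {B C A : Form} : Subformula (B.imp C) A → Subformula B A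
  | of_imp_right {B C A : Form} : Subformula (B.imp C) A → Subformula C A
  | of_box {B A : Form} : Subformula B.box A → Subformula B A

/-- A subsentence of `A` is a subformula of `A` or the negation of one. -/
def Subsentence (B A : Form) : Prop :=
  Subformula B A ∨ ∃ C : Form, B = C.neg ∧ Subformula C A

/-- `X` is S,A-maximal consistent. -/
def MaxConsistent (S : Set Form) (A : Form) (X : List Form) : Prop :=
  Consistent S X ∧ ∀ B : Form, Subformula B A → B ∈ X ∨ B.neg ∈ X

/-- `Z` is a bisimulation between the models `(D,R,V)` and `(D',R',V')`. -/
def Bisimulation {W W' : Type*} (D : Set W) (R : W → W → Prop) (V : ℕ → W → Prop)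
    (D' : Set W') (R' : W' → W' → Prop) (V' : ℕ → W' → Prop)
    (Z : W → W' → Prop) : Prop :=
  ∀ w w', Z w w' →
    w ∈ D ∧ w' ∈ D' ∧
    (∀ n, V n w ↔ V' n w') ∧
    (∀ x ∈ D, R w x → ∃ x' ∈ D', R' w' x' ∧ Z x x') ∧
    (∀ x' ∈ D', R' w' x' → ∃ x ∈ D, R w x ∧ Z x x')

/-- Pointed models are bisimilar iff some bisimulation relates the two worlds. -/
def Bisimilar {W W' : Type*} (D : Set W) (R : W → W → Prop) (V : ℕ → W → Prop)
    (D' : Set W') (R' : W' → W' → Prop) (V' : ℕ → W' → Prop)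
    (w : W) (w' : W') : Prop :=
  ∃ Z : W → W' → Prop, Bisimulation D R V D' R' V' Z ∧ Z w w'

theorem valid_lob_iff_trans_cwf {W : Type} (D : Set W) (R : W → W → Prop)
    (hF : IsFrame D R) :
    (∀ A : Form, ValidIn D R ((A.box.imp A).box.imp A.box)) ↔
      ((∀ w ∈ D, ∀ x ∈ D, ∀ y ∈ D, R w x → R x y → R w y) ∧
        (∀ X ⊆ D, X.Nonempty → ∃ w ∈ X, ∀ x ∈ X, ¬ R w x)) := by
  constructor
  · intro h
    constructor
    · intro w hw x hx y hy hwx hxy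
      by_contra hwy
      have hv := h (Form.atom 0) (fun _ z => R w z ∧ z ≠ x) w hw
      simp only [Form.holds, ValidIn] at hv
      have hy' : y ≠ x := by rintro rfl; exact hwy hwx
      have hbox : ∀ z ∈ D, R w z → ((∀ u ∈ D, R z u → R w u ∧ u ≠ x) → R w z ∧ z ≠ x) := by
        intro z hz hwz hba
        refine ⟨hwz, ?_⟩
        rintro rfl
        exact hwy (hba y hy hxy).1
      exact (hv hbox x hx hwx).2 rfl
    · intro X hXD hne
      by_contra hc
      push_neg at hc
      obtain ⟨w, hwX⟩ := hne
      have hw := hXD hwX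
      have hv := h (Form.atom 0) (fun _ z => z ∉ X) w hw
      simp only [Form.holds, ValidIn] at hv
      have hbox : ∀ z ∈ D, R w z → ((∀ u ∈ D, R z u → u ∉ X) → z ∉ X) := by
        intro z hz hwz hba hzX
        obtain ⟨u, huX, hzu⟩ := hc z hzX
        exact hba u (hXD huX) hzu huX
      obtain ⟨x, hxX, hwx⟩ := hc w hwX
      exact hv hbox x (hXD hxX) hwx hxX
  · rintro ⟨htr, hcwf⟩ A V w hw
    simp only [Form.holds]
    intro hyp
    by_contra hb
    push_neg at hb
    obtain ⟨x, hx, hwx, hnx⟩ := hb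
    set X : Set W := {z | z ∈ D ∧ R w z ∧ ¬ Form.holds D R V A z} with hXdef
    obtain ⟨m, hmX, hmax⟩ := hcwf X (fun z hz => hz.1) ⟨x, hx, hwx, hnx⟩
    obtain ⟨hmD, hwm, hmA⟩ := hmX
    apply hmA
    apply hyp m hmD hwm
    intro u hu hmu
    by_contra hnu
    exact hmax u ⟨hu, htr w hw m hmD u hu hwm hmu, hnu⟩ hmu
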